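/- Let A = (a_{ij}) ∈ ℝ^{n×n} be a pseudo-diagonalizable matrix with n ≥ 2 and max{a_{11},…,a_{nn}} ≤ 0. Then λ(A) = 0; the transitive closure satisfies Γ(A_λ) = I ⊕ A, i.e., (Γ(A_λ))_{ij} = a_{ij} for i ≠ j and (Γ(A_λ))_{ii} = 0; the eigenspace of A has dimension 1, and for any fixed i ∈ {1,…,n}, a basis of the eigenspace is given by the single vector g obtained from the i-th column of A by replacing its i-th entry with 0 (g_j = a_{ji} for j ≠ i, g_i = 0): the eigenvectors of A with real entries are exactly the vectors α + g with α ∈ ℝ, all with eigenvalue 0. -/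

import Mathlib

open Finset

/-- `A` is pseudo-diagonalizable: similar, via a generalized permutation matrix given by a
permutation `π` and reals `p i`, to a pseudo-diagonal matrix `D` (a real matrix whose
off-diagonal entries are `0`). -/
def PseudoDiagonalizable {n : ℕ} (A : Fin n → Fin n → ℝ) : Prop :=
  ∃ (π : Equiv.Perm (Fin n)) (p : Fin n → ℝ) (D : Fin n → Fin n → ℝ),
    (∀ i j, i ≠ j → D i j = 0) ∧ ∀ i j, A i j = p i + D (π i) (π j) - p j

/-- Max-plus matrix product: `(A ⊗ B) i j = max_k (A i k + B k j)`. -/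
noncomputable def mpMul {n : ℕ} [NeZero n] (A B : Fin n → Fin n → ℝ) :
    Fin n → Fin n → ℝ :=
  fun i j => univ.sup' univ_nonempty fun k => A i k + B k j

/-- `mpPow A k` is the `k`-th max-plus power of `A` (for `k ≥ 1`). -/
noncomputable def mpPow {n : ℕ} [NeZero n] (A : Fin n → Fin n → ℝ) (k : ℕ) :
    Fin n → Fin n → ℝ :=
  (mpMul A)^[k - 1] A

/-- The transitive closure `Γ(A) = A ⊕ A² ⊕ … ⊕ Aⁿ` (entrywise maximum). -/
noncomputable def gammaClosure {n : ℕ} [NeZero n] (A : Fin n → Fin n → ℝ) :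
    Fin n → Fin n → ℝ :=
  fun i j => (Finset.Icc 1 n).sup'
    (Finset.nonempty_Icc.mpr (Nat.one_le_iff_ne_zero.mpr (NeZero.ne n)))
    fun k => mpPow A k i j

/-- The weight of the cycle determined by a list `l` of distinct indices. -/
def cycleWeight {n : ℕ} (A : Fin n → Fin n → ℝ) (l : List (Fin n)) : ℝ :=
  ((l.zip (l.rotate 1)).map fun p => A p.1 p.2).sum

/-- The mean of a cycle: its weight divided by its length. -/
noncomputable def cycleMean {n : ℕ} (A : Fin n → Fin n → ℝ) (l : List (Fin n)) : ℝ :=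
  cycleWeight A l / l.length

/-- The maximum cycle mean `λ(A)`. -/
noncomputable def maxCycleMean {n : ℕ} (A : Fin n → Fin n → ℝ) : ℝ :=
  sSup {m | ∃ l : List (Fin n), l ≠ [] ∧ l.Nodup ∧ m = cycleMean A l}

/-- Sum of differences over a zip of equal-length lists telescopes. -/
lemma zip_sum_sub {n : ℕ} (p : Fin n → ℝ) :
    ∀ (l1 l2 : List (Fin n)), l1.length = l2.length →
      ((l1.zip l2).map fun q => p q.1 - p q.2).sum
        = (l1.map p).sum - (l2.map p).sum := by
  intro l1
  induction l1 with
  | nil =>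
    intro l2 h
    have : l2 = [] := List.length_eq_zero_iff.mp h.symm
    simp [this]
  | cons a t ih =>
    intro l2 h
    cases l2 with
    | nil => simp at h
    | cons b t2 =>
      simp only [List.zip_cons_cons, List.map_cons, List.sum_cons,
        ih t2 (by simpa using h)]
      ring

/-- Entrywise bound on iterated max-plus products. -/
lemma mp_iter_bound {n : ℕ} [NeZero n] (A : Fin n → Fin n → ℝ) (p : Fin n → ℝ)
    (hle : ∀ i j, A i j ≤ p i - p j) :
    ∀ m i j, (mpMul A)^[m] A i j ≤ p i - p j := by
  intro m
  induction m with
  | zero => simpa using hle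
  | succ m ih =>
    intro i j
    rw [Function.iterate_succ_apply']
    apply Finset.sup'_le
    intro k _
    have h1 := ih k j
    have h2 := hle i k
    linarith

theorem eigen_pseudoDiagonalizable_nonpos {n : ℕ} [NeZero n] (hn : 2 ≤ n)
    (A : Fin n → Fin n → ℝ) (hA : PseudoDiagonalizable A)
    (ha : ∀ i, A i i ≤ 0)
    (Al : Fin n → Fin n → ℝ)
    (hAl : ∀ i j, Al i j = A i j - maxCycleMean A) :
    maxCycleMean A = 0 ∧
    (∀ i j, i ≠ j → gammaClosure Al i j = A i j) ∧
    (∀ i, gammaClosure Al i i = 0) ∧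
    ∀ i0 : Fin n, ∀ g : Fin n → ℝ,
      (g i0 = 0 ∧ ∀ j, j ≠ i0 → g j = A j i0) →
      ∀ (x : Fin n → ℝ) (l : ℝ),
        (∀ i, (univ.sup' univ_nonempty fun j => A i j + x j) = l + x i) ↔
          (l = 0 ∧ ∃ α : ℝ, ∀ j, x j = α + g j) := by
  obtain ⟨π, p, D, hD, hAD⟩ := hA
  have hoff : ∀ i j, i ≠ j → A i j = p i - p j := by
    intro i j hij
    rw [hAD i j, hD (π i) (π j) (fun h => hij (π.injective h))]
    ring
  have hle : ∀ i j, A i j ≤ p i - p j := by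
    intro i j
    by_cases h : i = j
    · subst h; have := ha i; linarith
    · exact (hoff i j h).le
  -- the maximum cycle mean is 0
  have hub : ∀ m ∈ {m | ∃ l : List (Fin n), l ≠ [] ∧ l.Nodup ∧ m = cycleMean A l},
      m ≤ 0 := by
    rintro m ⟨l, hne, hnd, rfl⟩
    have hw : cycleWeight A l ≤ 0 := by
      have h1 : cycleWeight A l ≤
          ((l.zip (l.rotate 1)).map fun q => p q.1 - p q.2).sum :=
        List.sum_le_sum (fun q _ => hle q.1 q.2)
      have h2 : ((l.zip (l.rotate 1)).map fun q => p q.1 - p q.2).sum = 0 := by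
        rw [zip_sum_sub p l (l.rotate 1) (l.length_rotate 1).symm]
        have : ((l.rotate 1).map p).sum = (l.map p).sum :=
          ((l.rotate_perm 1).map p).sum_eq
        rw [this]; ring
      calc cycleWeight A l ≤ _ := h1
        _ = 0 := h2
    have hlen : (0:ℝ) < l.length := by
      have : 0 < l.length := List.length_pos_iff.mpr hne
      exact_mod_cast this
    exact div_nonpos_of_nonpos_of_nonneg hw hlen.le
  have hmem : (0:ℝ) ∈ {m | ∃ l : List (Fin n), l ≠ [] ∧ l.Nodup ∧ m = cycleMean A l} := by
    refine ⟨[⟨0, by omega⟩, ⟨1, by omega⟩], by simp, ?_, ?_⟩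
    · simp [Fin.ext_iff]
    · have h01 : (⟨0, by omega⟩ : Fin n) ≠ ⟨1, by omega⟩ := by simp [Fin.ext_iff]
      have hw : cycleWeight A [⟨0, by omega⟩, ⟨1, by omega⟩] = 0 := by
        simp only [cycleWeight, List.rotate]
        simp [hoff _ _ h01, hoff _ _ h01.symm]
        rw [hoff _ _ (by simp [Fin.ext_iff]), hoff _ _ (by simp [Fin.ext_iff])]; ring
      rw [cycleMean, hw]; simp
  have hlam : maxCycleMean A = 0 := by
    unfold maxCycleMean
    apply le_antisymm
    · exact Real.sSup_le hub le_rfl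
    · exact le_csSup ⟨0, hub⟩ hmem
  have hAe : Al = A := by
    funext i j
    rw [hAl, hlam]; ring
  subst hAe
  -- auxiliary: another index exists
  have hexists : ∀ i : Fin n, ∃ j : Fin n, j ≠ i := by
    intro i
    exact Fintype.exists_ne_of_one_lt_card (by simp; omega) i
  refine ⟨hlam, ?_, ?_, ?_⟩
  · -- off-diagonal entries of the closure
    intro i j hij
    unfold gammaClosure
    apply le_antisymm
    · apply Finset.sup'_le
      intro k _
      have := mp_iter_bound Al p hle (k - 1) i j
      rw [hoff i j hij]
      exact this
    · have h1 : (1:ℕ) ∈ Finset.Icc 1 n := Finset.mem_Icc.mpr ⟨le_rfl, by omega⟩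
      have : Al i j = mpPow Al 1 i j := by simp [mpPow]
      rw [this]
      exact Finset.le_sup' (fun k => mpPow Al k i j) h1
  · -- diagonal entries of the closure
    intro i
    unfold gammaClosure
    apply le_antisymm
    · apply Finset.sup'_le
      intro k _
      have := mp_iter_bound Al p hle (k - 1) i i
      simp only [mpPow]
      linarith
    · obtain ⟨j, hj⟩ := hexists i
      have h2 : (2:ℕ) ∈ Finset.Icc 1 n := Finset.mem_Icc.mpr ⟨by omega, hn⟩
      have hval : (0:ℝ) ≤ mpPow Al 2 i i := by
        have heq : mpPow Al 2 i i
            = univ.sup' univ_nonempty (fun k => Al i k + Al k i) := by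
          simp [mpPow, mpMul]
        rw [heq]
        have hle' := Finset.le_sup' (fun k => Al i k + Al k i) (Finset.mem_univ j)
        have : Al i j + Al j i = 0 := by
          rw [hoff i j (Ne.symm hj), hoff j i hj]; ring
        linarith
      exact le_trans hval (Finset.le_sup' (fun k => mpPow Al k i i) h2)
  · -- eigenvectors
    rintro i0 g ⟨hg0, hg⟩ x l
    have hgall : ∀ j, g j = p j - p i0 := by
      intro j
      by_cases h : j = i0
      · subst h; rw [hg0]; ring
      · rw [hg j h, hoff j i0 h]
    constructor
    · intro hx
      obtain ⟨j0, -, hj0⟩ := Finset.exists_mem_eq_sup'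
        (univ_nonempty (α := Fin n)) (fun j => x j - p j)
      set m := univ.sup' univ_nonempty (fun j => x j - p j) with hm
      have hym : ∀ j, x j - p j ≤ m :=
        fun j => Finset.le_sup' (fun j => x j - p j) (Finset.mem_univ j)
      have hub' : ∀ i, l + x i ≤ p i + m := by
        intro i
        rw [← hx i]
        apply Finset.sup'_le
        intro j _
        have h1 := hle i j
        have h2 := hym j
        linarith
      have hlb : ∀ i j, j ≠ i → x j - p j ≤ l + x i - p i := by
        intro i j hij
        have h1 : Al i j + x j ≤ l + x i := by
          rw [← hx i]
          exact Finset.le_sup' (fun j => Al i j + x j) (Finset.mem_univ j)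
        rw [hoff i j (Ne.symm hij)] at h1
        linarith
      have hl0 : l ≤ 0 := by
        have := hub' j0
        have := hj0
        -- hj0 : m = x j0 - p j0
        linarith [hj0.ge, hj0.le]
      obtain ⟨j1, hj1⟩ := hexists j0
      have hge : 0 ≤ l := by
        have h1 := hlb j0 j1 hj1
        have h2 := hlb j1 j0 (Ne.symm hj1)
        have h3 := hym j1
        -- m = x j0 - p j0
        have h4 : m = x j0 - p j0 := hj0
        linarith
      have hl : l = 0 := le_antisymm hl0 hge
      refine ⟨hl, m + p i0, ?_⟩
      intro j
      have hxm : x j - p j = m := by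
        by_cases h : j = j0
        · subst h; exact hj0.symm
        · have h1 := hlb j j0 (Ne.symm h)
          have h2 := hym j
          have h4 : m = x j0 - p j0 := hj0
          rw [hl] at h1
          linarith
      rw [hgall j]
      linarith
    · rintro ⟨rfl, α, hα⟩
      intro i
      have hxj : ∀ j, x j = (α - p i0) + p j := by
        intro j
        rw [hα j, hgall j]; ring
      obtain ⟨j1, hj1⟩ := hexists i
      apply le_antisymm
      · apply Finset.sup'_le
        intro j _
        by_cases h : j = i
        · subst h
          have := ha j
          rw [hxj j]
          linarith
        · rw [hoff i j (Ne.symm h), hxj j, hxj i]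
          ring_nf
          linarith [le_refl (α - p i0 + p i)]
      · have h1 := Finset.le_sup' (fun j => Al i j + x j) (Finset.mem_univ j1)
        have h2 : Al i j1 + x j1 = 0 + x i := by
          rw [hoff i j1 (Ne.symm hj1), hxj j1, hxj i]; ring
        rw [h2] at h1
        exact h1
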